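/- arXiv:1007.1111 — 3 statements merged into one kernel-verified Lean document; each statement's English description precedes it below -/
import Mathlib

section
/- Let n ≥ 2 be a natural number, let a : I → ℝ be a continuous function on an open interval I, and let x₀ ∈ I. Then there exist an open subinterval J ⊆ I containing x₀ and a three-times continuously differentiable function φ : J → ℝ with φ'(x) > 0 for all x ∈ J, such that (n(n²-1)/12)·(φ'(x)·φ'''(x) - (3/2)·φ''(x)²)/φ'(x)² = a(x) for all x ∈ J. -/
open Set intervalIntegral MeasureTheory

private lemma schwarzian_core (u p q : ℝ → ℝ) (J : Set ℝ) (hJo : IsOpen J) (hJc : Convex ℝ J)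
    (x₀ : ℝ) (hx₀J : x₀ ∈ J)
    (hu : ∀ x ∈ J, HasDerivAt u (p x) x)
    (hp : ∀ x ∈ J, HasDerivAt p (-(q x) * u x) x)
    (hqc : ContinuousOn q J)
    (hupos : ∀ x ∈ J, 0 < u x) :
    ∃ φ : ℝ → ℝ, ContDiffOn ℝ 3 φ J ∧
        (∀ x ∈ J, deriv φ x = (u x ^ 2)⁻¹) ∧
        (∀ x ∈ J, iteratedDeriv 2 φ x = -(2 * u x ^ 1 * p x) / (u x ^ 2) ^ 2) ∧
        (∀ x ∈ J, iteratedDeriv 3 φ x =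
          ((-(2 * (p x * p x + u x * (-(q x) * u x)))) * (u x ^ 2) ^ 2 -
            (-(2 * u x ^ 1 * p x)) * (2 * (u x ^ 2) ^ 1 * (2 * u x ^ 1 * p x))) /
            ((u x ^ 2) ^ 2) ^ 2) := by
  have hune : ∀ x ∈ J, u x ≠ 0 := fun x hx => (hupos x hx).ne'
  have huc : ContinuousOn u J := fun x hx => (hu x hx).continuousAt.continuousWithinAt
  have hpc : ContinuousOn p J := fun x hx => (hp x hx).continuousAt.continuousWithinAt
  set g : ℝ → ℝ := fun x => (u x ^ 2)⁻¹ with hg_def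
  have hgc : ContinuousOn g J := ((huc.pow 2).inv₀ (fun x hx => pow_ne_zero 2 (hune x hx)))
  set φ : ℝ → ℝ := fun x => ∫ t in x₀..x, g t with hφ_def
  have hφd : ∀ x ∈ J, HasDerivAt φ (g x) x := by
    intro x hx
    apply intervalIntegral.integral_hasDerivAt_right
    · exact (hgc.mono (hJc.ordConnected.uIcc_subset hx₀J hx)).intervalIntegrable
    · exact hgc.stronglyMeasurableAtFilter hJo x hx
    · exact hgc.continuousAt (hJo.mem_nhds hx)
  set B : ℝ → ℝ := fun x => -(2 * u x ^ 1 * p x) / (u x ^ 2) ^ 2 with hB_def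
  have hgd : ∀ x ∈ J, HasDerivAt g (B x) x := by
    intro x hx
    exact ((hu x hx).pow 2).inv (pow_ne_zero 2 (hune x hx))
  set T : ℝ → ℝ := fun x =>
    ((-(2 * (p x * p x + u x * (-(q x) * u x)))) * (u x ^ 2) ^ 2 -
      (-(2 * u x ^ 1 * p x)) * (2 * (u x ^ 2) ^ 1 * (2 * u x ^ 1 * p x))) /
      ((u x ^ 2) ^ 2) ^ 2 with hT_def
  have hBd : ∀ x ∈ J, HasDerivAt B (T x) x := by
    intro x hx
    have h1 : HasDerivAt (fun y => u y * p y) (p x * p x + u x * (-(q x) * u x)) x :=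
      (hu x hx).mul (hp x hx)
    have hnum : HasDerivAt (fun y => -(2 * u y ^ 1 * p y))
        (-(2 * (p x * p x + u x * (-(q x) * u x)))) x := by
      have h2 := (h1.const_mul (2:ℝ)).neg
      simpa [mul_assoc, Pi.neg_def] using h2
    have hden : HasDerivAt (fun y => (u y ^ 2) ^ 2)
        (2 * (u x ^ 2) ^ 1 * (2 * u x ^ 1 * p x)) x := ((hu x hx).pow 2).pow 2
    exact hnum.div hden (pow_ne_zero 2 (pow_ne_zero 2 (hune x hx)))
  have hdφ : ∀ x ∈ J, deriv φ x = g x := fun x hx => (hφd x hx).deriv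
  have hd2φ : ∀ x ∈ J, deriv (deriv φ) x = B x := by
    intro x hx
    have hev : deriv φ =ᶠ[nhds x] g :=
      Filter.eventuallyEq_of_mem (hJo.mem_nhds hx) hdφ
    rw [hev.deriv_eq]
    exact (hgd x hx).deriv
  have hd3φ : ∀ x ∈ J, deriv (deriv (deriv φ)) x = T x := by
    intro x hx
    have hev : deriv (deriv φ) =ᶠ[nhds x] B :=
      Filter.eventuallyEq_of_mem (hJo.mem_nhds hx) hd2φ
    rw [hev.deriv_eq]
    exact (hBd x hx).deriv
  have hu2 : ContDiffOn ℝ 2 u J := by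
    rw [show (2 : WithTop ℕ∞) = 1 + 1 by norm_num, contDiffOn_succ_iff_deriv_of_isOpen hJo]
    refine ⟨fun x hx => ((hu x hx).differentiableAt.differentiableWithinAt), by simp, ?_⟩
    have : ContDiffOn ℝ 1 p J := by
      rw [show (1 : WithTop ℕ∞) = 0 + 1 by norm_num, contDiffOn_succ_iff_deriv_of_isOpen hJo]
      refine ⟨fun x hx => ((hp x hx).differentiableAt.differentiableWithinAt), by simp, ?_⟩
      rw [contDiffOn_zero]
      exact ContinuousOn.congr ((hqc.neg.mul huc)) (fun x hx => (hp x hx).deriv)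
    exact this.congr (fun x hx => (hu x hx).deriv)
  have hg2 : ContDiffOn ℝ 2 g J := (hu2.pow 2).inv (fun x hx => pow_ne_zero 2 (hune x hx))
  have hφ3 : ContDiffOn ℝ 3 φ J := by
    rw [show (3 : WithTop ℕ∞) = 2 + 1 by norm_num, contDiffOn_succ_iff_deriv_of_isOpen hJo]
    refine ⟨fun x hx => (hφd x hx).differentiableAt.differentiableWithinAt, by simp, ?_⟩
    exact hg2.congr hdφ
  refine ⟨φ, hφ3, hdφ, ?_, ?_⟩
  · intro x hx
    rw [iteratedDeriv_succ, iteratedDeriv_one]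
    exact hd2φ x hx
  · intro x hx
    rw [iteratedDeriv_succ, iteratedDeriv_succ, iteratedDeriv_one]
    exact hd3φ x hx

private lemma schwarzian_pl (q : ℝ → ℝ) (M : ℝ) (x₀ δ ε : ℝ)
    (hM0 : 0 ≤ M) (hMq : ∀ t ∈ Metric.closedBall x₀ (δ / 2), |q t| ≤ M)
    (hq_cont : ContinuousOn q (Metric.closedBall x₀ (δ/2)))
    (hε : 0 < ε) (hεC : ε ≤ 1 / (1 + 2*M))
    (hsub : Icc (x₀ - ε) (x₀ + ε) ⊆ Metric.closedBall x₀ (δ / 2)) :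
    IsPicardLindelof (fun t (x : ℝ × ℝ) => (x.2, -(q t) * x.1)) (tmin := x₀ - ε)
      (tmax := x₀ + ε) ⟨x₀, by constructor <;> linarith⟩
      ((1 : ℝ), (0 : ℝ)) 1 0 (Real.toNNReal (1 + 2 * M)) (Real.toNNReal (M + 1)) := by
  have hC : (0:ℝ) < 1 + 2 * M := by linarith
  have hL : ((1 + 2 * M).toNNReal : ℝ) = 1 + 2 * M := Real.coe_toNNReal _ hC.le
  constructor
  · intro t ht
    rw [lipschitzOnWith_iff_dist_le_mul]
    intro x _ y _
    have hqt : |q t| ≤ M := hMq t (hsub ht)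
    have h1 : dist x.2 y.2 ≤ dist x y := le_trans (le_max_right _ _) Prod.dist_eq.ge
    have h2 : dist x.1 y.1 ≤ dist x y := le_trans (le_max_left _ _) Prod.dist_eq.ge
    have hd : (0:ℝ) ≤ dist x y := dist_nonneg
    have hcoe : (Real.toNNReal (M + 1) : ℝ) = M + 1 := Real.coe_toNNReal _ (by linarith)
    rw [hcoe]
    refine le_trans (le_of_eq Prod.dist_eq) (max_le ?_ ?_)
    · simp only []
      nlinarith
    · simp only [Real.dist_eq] at h2 ⊢
      have he : -(q t) * x.1 - -(q t) * y.1 = -(q t) * (x.1 - y.1) := by ring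
      rw [he, abs_mul, abs_neg]
      nlinarith [abs_nonneg (x.1 - y.1), abs_nonneg (q t)]
  · intro x _
    exact (continuousOn_const.prodMk (((hq_cont.mono hsub).neg.mul continuousOn_const)))
  · intro t ht x hx
    have hqt : |q t| ≤ M := hMq t (hsub ht)
    have hx' : dist x ((1:ℝ), (0:ℝ)) ≤ 1 := by simpa using Metric.mem_closedBall.mp hx
    rw [Prod.dist_eq] at hx'
    have hx1 : |x.1 - 1| ≤ 1 := by
      have := le_trans (le_max_left (dist x.1 (1:ℝ)) (dist x.2 (0:ℝ))) hx'
      simpa [Real.dist_eq] using this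
    have hx2 : |x.2| ≤ 1 := by
      have := le_trans (le_max_right (dist x.1 (1:ℝ)) (dist x.2 (0:ℝ))) hx'
      simpa [Real.dist_eq] using this
    have hx1' : |x.1| ≤ 2 := by
      rcases abs_le.mp hx1 with ⟨h1, h2⟩
      exact abs_le.mpr ⟨by linarith, by linarith⟩
    rw [hL]
    refine le_trans (le_of_eq (Prod.norm_def _)) (max_le ?_ ?_)
    · simpa [Real.norm_eq_abs] using hx2.trans (by linarith)
    · simp only [Real.norm_eq_abs, abs_mul, abs_neg]
      nlinarith [abs_nonneg (q t), abs_nonneg x.1]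
  · simp only [hL, NNReal.coe_one, NNReal.coe_zero, sub_zero]
    rw [show x₀ + ε - x₀ = ε by ring, show x₀ - (x₀ - ε) = ε by ring, max_self]
    have := mul_le_mul_of_nonneg_left hεC hC.le
    rw [mul_one_div, div_self hC.ne'] at this
    linarith

private lemma hda_fst {f : ℝ → ℝ × ℝ} {y : ℝ × ℝ} {x : ℝ} (h : HasDerivAt f y x) :
    HasDerivAt (fun t => (f t).1) y.1 x := by
  simpa using h.hasFDerivAt.fst.hasDerivAt

private lemma hda_snd {f : ℝ → ℝ × ℝ} {y : ℝ × ℝ} {x : ℝ} (h : HasDerivAt f y x) :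
    HasDerivAt (fun t => (f t).2) y.2 x := by
  simpa using h.hasFDerivAt.snd.hasDerivAt

/-- Local solvability of the Schwarzian equation: for `n ≥ 2` and `a` continuous
on the open interval `I` with `x₀ ∈ I`, there are an open subinterval `J ⊆ I`
containing `x₀` and a `C³` function `φ` with `φ' > 0` on `J` such that
`(n(n²-1)/12)·(φ'·φ''' - (3/2)·φ''²)/φ'² = a` on `J`. -/
theorem stmt_9 (n : ℕ) (hn : 2 ≤ n) (I : Set ℝ) (hI : IsOpen I) (hIc : Convex ℝ I)
    (a : ℝ → ℝ) (ha : ContinuousOn a I) (x₀ : ℝ) (hx₀ : x₀ ∈ I) :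
    ∃ J : Set ℝ, J ⊆ I ∧ IsOpen J ∧ Convex ℝ J ∧ x₀ ∈ J ∧
      ∃ φ : ℝ → ℝ, ContDiffOn ℝ 3 φ J ∧
        (∀ x ∈ J, 0 < deriv φ x) ∧
        (∀ x ∈ J, ((n : ℝ) * ((n : ℝ) ^ 2 - 1) / 12) *
          (deriv φ x * iteratedDeriv 3 φ x - (3 / 2) * (iteratedDeriv 2 φ x) ^ 2)
          / (deriv φ x) ^ 2 = a x) := by
  set c : ℝ := (n : ℝ) * ((n : ℝ) ^ 2 - 1) / 12 with hc_def
  have hn2 : (2 : ℝ) ≤ (n : ℝ) := by exact_mod_cast hn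
  have hc : 0 < c := by
    have : (0:ℝ) < (n:ℝ) * ((n:ℝ)^2 - 1) := by nlinarith
    positivity
  set q : ℝ → ℝ := fun x => a x / (2 * c) with hq_def
  have hq_cont : ContinuousOn q I := ha.div_const _
  obtain ⟨δ, hδ, hball⟩ := Metric.isOpen_iff.mp hI x₀ hx₀
  have hIcc : Metric.closedBall x₀ (δ / 2) ⊆ I :=
    (Metric.closedBall_subset_ball (by linarith)).trans hball
  obtain ⟨M₀, hM₀⟩ := (isCompact_closedBall x₀ (δ / 2)).exists_bound_of_continuousOn
    (hq_cont.mono hIcc)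
  set M : ℝ := max M₀ 0 with hM_def
  have hM0 : 0 ≤ M := le_max_right _ _
  have hMq : ∀ t ∈ Metric.closedBall x₀ (δ / 2), |q t| ≤ M := fun t ht =>
    (le_max_left _ _).trans' (by simpa using hM₀ t ht)
  have hC : (0:ℝ) < 1 + 2 * M := by linarith
  set ε : ℝ := min (δ / 2) (1 / (1 + 2 * M)) with hε_def
  have hε : 0 < ε := lt_min (by linarith) (by positivity)
  have hεδ : ε ≤ δ / 2 := min_le_left _ _
  have hεC : ε ≤ 1 / (1 + 2 * M) := min_le_right _ _
  have hsub : Icc (x₀ - ε) (x₀ + ε) ⊆ Metric.closedBall x₀ (δ / 2) := by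
    rw [Real.closedBall_eq_Icc]
    exact Icc_subset_Icc (by linarith) (by linarith)
  have hpl := schwarzian_pl q M x₀ δ ε hM0 hMq (hq_cont.mono hIcc) hε hεC hsub
  obtain ⟨f, hf0, hf⟩ := hpl.exists_eq_forall_mem_Icc_hasDerivWithinAt₀
  set u : ℝ → ℝ := fun t => (f t).1 with hu_def
  set p : ℝ → ℝ := fun t => (f t).2 with hp_def
  have hfIoo : ∀ x ∈ Ioo (x₀ - ε) (x₀ + ε),
      HasDerivAt f (((f x).2, -(q x) * (f x).1)) x := fun x hx =>
    (hf x (Ioo_subset_Icc_self hx)).hasDerivAt (Icc_mem_nhds hx.1 hx.2)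
  have hu : ∀ x ∈ Ioo (x₀ - ε) (x₀ + ε), HasDerivAt u (p x) x := fun x hx =>
    hda_fst (hfIoo x hx)
  have hp : ∀ x ∈ Ioo (x₀ - ε) (x₀ + ε), HasDerivAt p (-(q x) * u x) x := fun x hx =>
    hda_snd (hfIoo x hx)
  have hucont : ContinuousOn u (Ioo (x₀ - ε) (x₀ + ε)) := fun x hx =>
    (hu x hx).continuousAt.continuousWithinAt
  -- positivity neighborhood
  have hx₀Ioo : x₀ ∈ Ioo (x₀ - ε) (x₀ + ε) := by constructor <;> simp <;> linarith
  have hu0 : u x₀ = 1 := by simp [hu_def, hf0]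
  have hSopen : IsOpen (Ioo (x₀ - ε) (x₀ + ε) ∩ u ⁻¹' Ioi 0) :=
    hucont.isOpen_inter_preimage isOpen_Ioo isOpen_Ioi
  have hx₀S : x₀ ∈ Ioo (x₀ - ε) (x₀ + ε) ∩ u ⁻¹' Ioi 0 :=
    ⟨hx₀Ioo, by simp [hu0]⟩
  obtain ⟨r, hr, hrball⟩ := Metric.isOpen_iff.mp hSopen x₀ hx₀S
  set J : Set ℝ := Ioo (x₀ - r) (x₀ + r) with hJ_def
  have hJS : J ⊆ Ioo (x₀ - ε) (x₀ + ε) ∩ u ⁻¹' Ioi 0 := by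
    rw [hJ_def, ← Real.ball_eq_Ioo]; exact hrball
  have hJIoo : J ⊆ Ioo (x₀ - ε) (x₀ + ε) := fun x hx => (hJS hx).1
  have hJI : J ⊆ I := fun x hx => hIcc (hsub (Ioo_subset_Icc_self (hJIoo hx)))
  have hx₀J : x₀ ∈ J := by constructor <;> simp <;> linarith
  have hupos : ∀ x ∈ J, 0 < u x := fun x hx => (hJS hx).2
  obtain ⟨φ, hφ3, hdφ, hd2φ, hd3φ⟩ := schwarzian_core u p q J isOpen_Ioo (convex_Ioo _ _)
    x₀ hx₀J (fun x hx => hu x (hJIoo hx)) (fun x hx => hp x (hJIoo hx))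
    (hq_cont.mono hJI) hupos
  refine ⟨J, hJI, isOpen_Ioo, convex_Ioo _ _, hx₀J, φ, hφ3, ?_, ?_⟩
  · intro x hx
    rw [hdφ x hx]
    have := hupos x hx
    positivity
  · intro x hx
    rw [hdφ x hx, hd2φ x hx, hd3φ x hx]
    have hw : u x ≠ 0 := (hupos x hx).ne'
    have hqx : q x = a x / (2 * c) := rfl
    rw [hq_def] at *
    field_simp
    ring
end

section
/- Let a, b, c, d ∈ ℝ with ad - bc ≠ 0, let f(x) = (ax+b)/(cx+d), and let I ⊆ ℝ be an open interval on which cx + d ≠ 0. Let g : f(I) → ℝ and suppose z : f(I) → ℝ is three times differentiable and satisfies z'''(t) + g(t)·z(t) = 0 for all t ∈ f(I). Then the function y(x) := f'(x)^{-1}·z(f(x)) is three times differentiable on I and satisfies y'''(x) + f'(x)³·g(f(x))·y(x) = 0 for all x ∈ I. -/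
/-- Projective invariance of the Laguerre–Forsyth form for `n = 3`: if
`z''' + g z = 0` on `f(I)` for a Möbius transformation `f x = (a*x+b)/(c*x+d)`
whose denominator does not vanish on the open interval `I`, then
`y x = f'(x)⁻¹ · z(f x)` is three times differentiable on `I` and satisfies
`y''' + f'³·g(f)·y = 0` on `I`. -/
theorem stmt_13 (a b c d : ℝ) (h : a * d - b * c ≠ 0)
    (f : ℝ → ℝ) (hf : ∀ x, f x = (a * x + b) / (c * x + d))
    (I : Set ℝ) (hI : IsOpen I) (hIc : Convex ℝ I)
    (hdom : ∀ x ∈ I, c * x + d ≠ 0)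
    (g z : ℝ → ℝ)
    (hz : ∀ t ∈ f '' I, ∀ k < 3, DifferentiableAt ℝ (iteratedDeriv k z) t)
    (heq : ∀ t ∈ f '' I, iteratedDeriv 3 z t + g t * z t = 0)
    (y : ℝ → ℝ) (hy : ∀ x, y x = (deriv f x)⁻¹ * z (f x)) :
    (∀ x ∈ I, ∀ k < 3, DifferentiableAt ℝ (iteratedDeriv k y) x) ∧
    (∀ x ∈ I, iteratedDeriv 3 y x + (deriv f x) ^ 3 * g (f x) * y x = 0) := by
  have hfeq : f = fun x => (a * x + b) / (c * x + d) := funext hf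
  set D := a * d - b * c with hDdef
  -- differentiability of z and its derivatives at points of f '' I
  have hz0d : ∀ t ∈ f '' I, DifferentiableAt ℝ z t := by
    intro t ht
    simpa [iteratedDeriv_zero] using hz t ht 0 (by norm_num)
  have hz1d : ∀ t ∈ f '' I, DifferentiableAt ℝ (deriv z) t := by
    intro t ht
    simpa [iteratedDeriv_one] using hz t ht 1 (by norm_num)
  have hz2d : ∀ t ∈ f '' I, DifferentiableAt ℝ (deriv (deriv z)) t := by
    intro t ht
    have h2 := hz t ht 2 (by norm_num)
    rwa [show (2 : ℕ) = 1 + 1 by norm_num, iteratedDeriv_succ, iteratedDeriv_one] at h2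
  have hz3eq : ∀ t ∈ f '' I, deriv (deriv (deriv z)) t = -(g t * z t) := by
    intro t ht
    have h3 := heq t ht
    rw [show (3 : ℕ) = 1 + 1 + 1 by norm_num, iteratedDeriv_succ, iteratedDeriv_succ,
      iteratedDeriv_one] at h3
    linarith
  -- derivative of f
  have hF : ∀ x ∈ I, HasDerivAt f (D / (c * x + d) ^ 2) x := by
    intro x hx
    have hW := hdom x hx
    have h1 : HasDerivAt (fun u => a * u + b) a x := by
      simpa using ((hasDerivAt_id x).const_mul a).add_const b
    have h2 : HasDerivAt (fun u => c * u + d) c x := by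
      simpa using ((hasDerivAt_id x).const_mul c).add_const d
    have := h1.div h2 hW
    rw [hfeq]
    refine this.congr_deriv ?_
    field_simp
    ring
  have hw : ∀ x : ℝ, HasDerivAt (fun u => c * u + d) c x := by
    intro x
    simpa using ((hasDerivAt_id x).const_mul c).add_const d
  -- chain rules
  have hc0 : ∀ x ∈ I, HasDerivAt (fun u => z (f u))
      (deriv z (f x) * (D / (c * x + d) ^ 2)) x := by
    intro x hx
    have := ((hz0d (f x) ⟨x, hx, rfl⟩).hasDerivAt).comp x (hF x hx)
    exact this
  have hc1 : ∀ x ∈ I, HasDerivAt (fun u => deriv z (f u))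
      (deriv (deriv z) (f x) * (D / (c * x + d) ^ 2)) x := by
    intro x hx
    have := ((hz1d (f x) ⟨x, hx, rfl⟩).hasDerivAt).comp x (hF x hx)
    exact this
  have hc2 : ∀ x ∈ I, HasDerivAt (fun u => deriv (deriv z) (f u))
      (deriv (deriv (deriv z)) (f x) * (D / (c * x + d) ^ 2)) x := by
    intro x hx
    have := ((hz2d (f x) ⟨x, hx, rfl⟩).hasDerivAt).comp x (hF x hx)
    exact this
  -- the three key derivative computations
  have key0 : ∀ x ∈ I, HasDerivAt (fun u => (c * u + d) ^ 2 / D * z (f u))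
      (2 * c * (c * x + d) / D * z (f x) + deriv z (f x)) x := by
    intro x hx
    have hW := hdom x hx
    have hp : HasDerivAt (fun u => (c * u + d) ^ 2 / D)
        (2 * (c * x + d) * c / D) x := by
      simpa using ((hw x).pow 2).div_const D
    have := hp.mul (hc0 x hx)
    refine this.congr_deriv ?_
    field_simp
  have key1 : ∀ x ∈ I, HasDerivAt
      (fun u => 2 * c * (c * u + d) / D * z (f u) + deriv z (f u))
      (2 * c ^ 2 / D * z (f x) + 2 * c / (c * x + d) * deriv z (f x)
        + D / (c * x + d) ^ 2 * deriv (deriv z) (f x)) x := by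
    intro x hx
    have hW := hdom x hx
    have hp : HasDerivAt (fun u => 2 * c * (c * u + d) / D) (2 * c * c / D) x := by
      simpa using ((hw x).const_mul (2 * c)).div_const D
    have := (hp.mul (hc0 x hx)).add (hc1 x hx)
    refine this.congr_deriv ?_
    field_simp
  have key2 : ∀ x ∈ I, HasDerivAt
      (fun u => 2 * c ^ 2 / D * z (f u) + 2 * c / (c * u + d) * deriv z (f u)
        + D / (c * u + d) ^ 2 * deriv (deriv z) (f u))
      (D ^ 2 / (c * x + d) ^ 4 * deriv (deriv (deriv z)) (f x)) x := by
    intro x hx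
    have hW := hdom x hx
    have hW2 : (c * x + d) ^ 2 ≠ 0 := pow_ne_zero 2 hW
    have ht1 : HasDerivAt (fun u => 2 * c ^ 2 / D * z (f u))
        (2 * c ^ 2 / D * (deriv z (f x) * (D / (c * x + d) ^ 2))) x :=
      (hc0 x hx).const_mul _
    have hq : HasDerivAt (fun u => 2 * c / (c * u + d))
        ((0 * (c * x + d) - 2 * c * c) / (c * x + d) ^ 2) x :=
      (hasDerivAt_const x (2 * c)).div (hw x) hW
    have ht2 := hq.mul (hc1 x hx)
    have hr := (hasDerivAt_const x D).div ((hw x).pow 2) hW2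
    have ht3 := hr.mul (hc2 x hx)
    have := (ht1.add ht2).add ht3
    refine this.congr_deriv ?_
    simp only [Pi.div_apply, Pi.pow_apply]
    field_simp
    ring
  -- relate y with the explicit formula
  have hey : Set.EqOn y (fun x => (c * x + d) ^ 2 / D * z (f x)) I := by
    intro x hx
    rw [hy x, (hF x hx).deriv, inv_div]
  have hYy : ∀ x ∈ I, HasDerivAt y
      (2 * c * (c * x + d) / D * z (f x) + deriv z (f x)) x := by
    intro x hx
    exact (key0 x hx).congr_of_eventuallyEq
      (Filter.eventuallyEq_of_mem (hI.mem_nhds hx) hey)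
  have hd1 : Set.EqOn (deriv y)
      (fun x => 2 * c * (c * x + d) / D * z (f x) + deriv z (f x)) I := by
    intro x hx
    exact (hYy x hx).deriv
  have hY1y : ∀ x ∈ I, HasDerivAt (deriv y)
      (2 * c ^ 2 / D * z (f x) + 2 * c / (c * x + d) * deriv z (f x)
        + D / (c * x + d) ^ 2 * deriv (deriv z) (f x)) x := by
    intro x hx
    exact (key1 x hx).congr_of_eventuallyEq
      (Filter.eventuallyEq_of_mem (hI.mem_nhds hx) hd1)
  have hd2 : Set.EqOn (deriv (deriv y))
      (fun x => 2 * c ^ 2 / D * z (f x) + 2 * c / (c * x + d) * deriv z (f x)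
        + D / (c * x + d) ^ 2 * deriv (deriv z) (f x)) I := by
    intro x hx
    exact (hY1y x hx).deriv
  have hY2y : ∀ x ∈ I, HasDerivAt (deriv (deriv y))
      (D ^ 2 / (c * x + d) ^ 4 * deriv (deriv (deriv z)) (f x)) x := by
    intro x hx
    exact (key2 x hx).congr_of_eventuallyEq
      (Filter.eventuallyEq_of_mem (hI.mem_nhds hx) hd2)
  constructor
  · intro x hx k hk
    interval_cases k
    · simpa [iteratedDeriv_zero] using (hYy x hx).differentiableAt
    · rw [iteratedDeriv_one]
      exact (hY1y x hx).differentiableAt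
    · rw [show (2 : ℕ) = 1 + 1 by norm_num, iteratedDeriv_succ, iteratedDeriv_one]
      exact (hY2y x hx).differentiableAt
  · intro x hx
    have hW := hdom x hx
    have h3 : iteratedDeriv 3 y x
        = D ^ 2 / (c * x + d) ^ 4 * deriv (deriv (deriv z)) (f x) := by
      rw [show (3 : ℕ) = 1 + 1 + 1 by norm_num, iteratedDeriv_succ, iteratedDeriv_succ,
        iteratedDeriv_one]
      exact (hY2y x hx).deriv
    rw [h3, (hF x hx).deriv, hey hx, hz3eq (f x) ⟨x, hx, rfl⟩]
    field_simp
    ring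
end

section
/- Let I ⊆ ℝ be an open interval, x₀ ∈ I, let a₂ : I → ℝ be twice continuously differentiable, a₁ : I → ℝ continuously differentiable, and a₀ : I → ℝ continuous. Then there exist an open subinterval J ⊆ I containing x₀, a three-times continuously differentiable function φ : J → ℝ with φ'(x) > 0 for all x ∈ J, and a continuous function g : φ(J) → ℝ, such that: for every three-times differentiable y : J → ℝ satisfying y'''(x) + a₂(x)y''(x) + a₁(x)y'(x) + a₀(x)y(x) = 0 on J, and every three-times differentiable z : φ(J) → ℝ satisfying z(φ(x)) = φ'(x)·exp((1/3)∫_{x₀}^{x} a₂(t) dt)·y(x) for all x ∈ J, one has z'''(t) + g(t)·z(t) = 0 for all t ∈ φ(J). -/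
set_option maxHeartbeats 1000000

open Set Filter intervalIntegral MeasureTheory

private lemma iteratedDeriv_two' (f : ℝ → ℝ) : iteratedDeriv 2 f = deriv (deriv f) := by
  rw [show (2 : ℕ) = 1 + 1 from rfl, iteratedDeriv_succ, iteratedDeriv_one]

private lemma iteratedDeriv_three' (f : ℝ → ℝ) :
    iteratedDeriv 3 f = deriv (iteratedDeriv 2 f) := by
  rw [show (3 : ℕ) = 2 + 1 from rfl, iteratedDeriv_succ]

/-- Local reduction to Laguerre–Forsyth form for `n = 3`: given
`a₂ ∈ C²`, `a₁ ∈ C¹`, `a₀ ∈ C⁰` on an open interval `I` containing `x₀`, there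
exist an open subinterval `J ∋ x₀`, a `C³` change of variable `φ` with `φ' > 0`
on `J`, and a continuous `g` on `φ(J)`, such that whenever `y` solves
`y''' + a₂ y'' + a₁ y' + a₀ y = 0` on `J` and `z` is a three-times differentiable
function on `φ(J)` with `z(φ x) = φ'(x)·exp((1/3)∫_{x₀}^{x} a₂)·y(x)` on `J`,
then `z''' + g z = 0` on `φ(J)`. -/
theorem stmt_14 (I : Set ℝ) (hI : IsOpen I) (hIc : Convex ℝ I)
    (x₀ : ℝ) (hx₀ : x₀ ∈ I)
    (a₂ a₁ a₀ : ℝ → ℝ)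
    (ha₂ : ContDiffOn ℝ 2 a₂ I) (ha₁ : ContDiffOn ℝ 1 a₁ I)
    (ha₀ : ContinuousOn a₀ I) :
    ∃ J : Set ℝ, J ⊆ I ∧ IsOpen J ∧ Convex ℝ J ∧ x₀ ∈ J ∧
      ∃ φ : ℝ → ℝ, ContDiffOn ℝ 3 φ J ∧ (∀ x ∈ J, 0 < deriv φ x) ∧
        ∃ g : ℝ → ℝ, ContinuousOn g (φ '' J) ∧
          ∀ y : ℝ → ℝ,
            (∀ x ∈ J, ∀ k < 3, DifferentiableAt ℝ (iteratedDeriv k y) x) →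
            (∀ x ∈ J, iteratedDeriv 3 y x + a₂ x * iteratedDeriv 2 y x +
              a₁ x * deriv y x + a₀ x * y x = 0) →
            ∀ z : ℝ → ℝ,
              (∀ t ∈ φ '' J, ∀ k < 3, DifferentiableAt ℝ (iteratedDeriv k z) t) →
              (∀ x ∈ J, z (φ x) =
                deriv φ x * Real.exp ((1 / 3) * ∫ t in x₀..x, a₂ t) * y x) →
              ∀ t ∈ φ '' J, iteratedDeriv 3 z t + g t * z t = 0 := by
  -- ## Derivatives of the coefficients
  have hda₂ : ∀ x ∈ I, HasDerivAt a₂ (deriv a₂ x) x := fun x hx =>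
    ((ha₂.differentiableOn (by norm_num)).differentiableAt (hI.mem_nhds hx)).hasDerivAt
  have hA2P1 : ContDiffOn ℝ 1 (deriv a₂) I := ha₂.deriv_of_isOpen hI (by norm_num)
  have hdA2P : ∀ x ∈ I, HasDerivAt (deriv a₂) (deriv (deriv a₂) x) x := fun x hx =>
    ((hA2P1.differentiableOn (by norm_num)).differentiableAt (hI.mem_nhds hx)).hasDerivAt
  have hA2PPc : ContinuousOn (deriv (deriv a₂)) I :=
    hA2P1.continuousOn_deriv_of_isOpen hI le_rfl
  have hda₁ : ∀ x ∈ I, HasDerivAt a₁ (deriv a₁ x) x := fun x hx =>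
    ((ha₁.differentiableOn (by norm_num)).differentiableAt (hI.mem_nhds hx)).hasDerivAt
  have hA1Pc : ContinuousOn (deriv a₁) I := ha₁.continuousOn_deriv_of_isOpen hI le_rfl
  -- the Schwarzian coefficient `qf` and its derivative `qd`
  set qf : ℝ → ℝ := fun x => (deriv a₂ x + a₂ x * a₂ x / 3 - a₁ x) / 4 with hqfdef
  set qd : ℝ → ℝ :=
    fun x => (deriv (deriv a₂) x + 2 * a₂ x * deriv a₂ x / 3 - deriv a₁ x) / 4 with hqddef
  have hq1 : ContDiffOn ℝ 1 qf I :=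
    ((hA2P1.add (((ha₂.of_le (by norm_num)).mul (ha₂.of_le (by norm_num))).div_const 3)).sub
      ha₁).div_const 4
  have hdq : ∀ x ∈ I, HasDerivAt qf (qd x) x := by
    intro x hx
    have h := (((hdA2P x hx).add (((hda₂ x hx).mul (hda₂ x hx)).div_const 3)).sub
      (hda₁ x hx)).div_const 4
    refine h.congr_deriv ?_
    simp only [hqddef]; ring
  have hqdc : ContinuousOn qd I :=
    ((hA2PPc.add (((continuousOn_const.mul ha₂.continuousOn).mul
      hA2P1.continuousOn).div_const 3)).sub hA1Pc).div_const 4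
  -- ## Solve `u'' = qf · u`, `u x₀ = 1`, `u' x₀ = 0` via Picard–Lindelöf
  have hvf : ContDiffAt ℝ 1 (fun p : ℝ × ℝ × ℝ => (p.2.1, qf p.2.2 * p.1, (1 : ℝ)))
      ((1 : ℝ), (0 : ℝ), x₀) := by
    have hq' : ContDiffAt ℝ 1 qf x₀ := hq1.contDiffAt (hI.mem_nhds hx₀)
    exact ContDiffAt.prodMk (contDiffAt_snd.fst : ContDiffAt ℝ 1 (fun p : ℝ × ℝ × ℝ => p.2.1) ((1 : ℝ), (0 : ℝ), x₀))
      (ContDiffAt.prodMk ((hq'.comp ((1 : ℝ), (0 : ℝ), x₀) (contDiffAt_snd.snd)).mul contDiffAt_fst) contDiffAt_const)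
  obtain ⟨f, hf0, ε, hε, hf⟩ :=
    ContDiffAt.exists_forall_mem_closedBall_exists_eq_forall_mem_Ioo_hasDerivAt₀ (x₀ := ((1 : ℝ), (0 : ℝ), x₀)) hvf x₀
  set uu : ℝ → ℝ := fun t => (f t).1 with huudef
  set vv : ℝ → ℝ := fun t => (f t).2.1 with hvvdef
  set tf : ℝ → ℝ := fun t => (f t).2.2 with htfdef
  have hx₀Ioo : x₀ ∈ Ioo (x₀ - ε) (x₀ + ε) := by constructor <;> linarith
  have hfu : ∀ t ∈ Ioo (x₀ - ε) (x₀ + ε), HasDerivAt uu (vv t) t := by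
    intro t ht
    have h := ((ContinuousLinearMap.fst ℝ ℝ (ℝ × ℝ)).hasFDerivAt.comp t
      (hf t ht).hasFDerivAt).hasDerivAt
    simp at h; exact h
  have hftf : ∀ t ∈ Ioo (x₀ - ε) (x₀ + ε), HasDerivAt tf 1 t := by
    intro t ht
    have h := (((ContinuousLinearMap.snd ℝ ℝ ℝ).comp
      (ContinuousLinearMap.snd ℝ ℝ (ℝ × ℝ))).hasFDerivAt.comp t
      (hf t ht).hasFDerivAt).hasDerivAt
    simp at h; exact h
  -- the time component is the identity
  have htfid : ∀ t ∈ Ioo (x₀ - ε) (x₀ + ε), tf t = t := by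
    intro t ht
    have hconst : tf t - t = tf x₀ - x₀ := by
      have := (convex_Ioo (x₀ - ε) (x₀ + ε)).is_const_of_fderivWithin_eq_zero (𝕜 := ℝ)
        (f := fun s => tf s - s) ?_ ?_ ht hx₀Ioo
      · exact this
      · intro x hx
        exact (((hftf x hx).sub (hasDerivAt_id x)).differentiableAt).differentiableWithinAt
      · intro x hx
        rw [fderivWithin_of_isOpen isOpen_Ioo hx]
        have h0 : HasDerivAt (fun s => tf s - s) 0 x := by
          exact ((hftf x hx).sub (hasDerivAt_id x)).congr_deriv (sub_self 1)
        ext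
        simp [← toSpanSingleton_deriv, h0.deriv]
    have htf0 : tf x₀ = x₀ := by simp [htfdef, hf0]
    rw [htf0] at hconst
    linarith
  have hfv : ∀ t ∈ Ioo (x₀ - ε) (x₀ + ε), HasDerivAt vv (qf t * uu t) t := by
    intro t ht
    have h := (((ContinuousLinearMap.fst ℝ ℝ ℝ).comp
      (ContinuousLinearMap.snd ℝ ℝ (ℝ × ℝ))).hasFDerivAt.comp t
      (hf t ht).hasFDerivAt).hasDerivAt
    have h' : HasDerivAt vv (qf ((f t).2.2) * uu t) t := by
      simpa [Function.comp_def] using h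
    rwa [show (f t).2.2 = t from htfid t ht] at h'
  have hu1 : uu x₀ = 1 := by simp [huudef, hf0]
  -- ## choose a ball `B` where `u > 0` inside `Ioo ∩ I`
  have hUo : IsOpen (Ioo (x₀ - ε) (x₀ + ε) ∩ I) := isOpen_Ioo.inter hI
  have hx₀U : x₀ ∈ Ioo (x₀ - ε) (x₀ + ε) ∩ I := ⟨hx₀Ioo, hx₀⟩
  have hupos : ∀ᶠ t in nhds x₀, 0 < uu t := by
    have hc : ContinuousAt uu x₀ := (hfu x₀ hx₀Ioo).differentiableAt.continuousAt
    have h1 : ∀ᶠ s in nhds (uu x₀), 0 < s := by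
      rw [hu1]; exact eventually_gt_nhds zero_lt_one
    exact hc.tendsto.eventually h1
  obtain ⟨r, hr, hrsub⟩ := Metric.mem_nhds_iff.mp
    (inter_mem (hUo.mem_nhds hx₀U) hupos)
  set B := Metric.ball x₀ r with hBdef
  have hx₀B : x₀ ∈ B := Metric.mem_ball_self hr
  have hBU : B ⊆ Ioo (x₀ - ε) (x₀ + ε) := fun x hx => (hrsub hx).1.1
  have hBI : B ⊆ I := fun x hx => (hrsub hx).1.2
  have hBpos : ∀ x ∈ B, 0 < uu x := fun x hx => (hrsub hx).2
  have hucB : ContinuousOn uu B := fun x hx =>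
    ((hfu x (hBU hx)).differentiableAt.continuousAt).continuousWithinAt
  have hvcB : ContinuousOn vv B := fun x hx =>
    ((hfv x (hBU hx)).differentiableAt.continuousAt).continuousWithinAt
  -- ## the change of variable φ
  set φ : ℝ → ℝ := fun x => ∫ s in x₀..x, ((uu s) ^ 2)⁻¹ with hφdef
  have hcu : ContinuousOn (fun s => ((uu s) ^ 2)⁻¹) B :=
    (hucB.pow 2).inv₀ fun x hx => pow_ne_zero 2 (hBpos x hx).ne'
  have hdφ : ∀ x ∈ B, HasDerivAt φ ((uu x) ^ 2)⁻¹ x := by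
    intro x hx
    refine integral_hasDerivAt_right ((hcu.mono ?_).intervalIntegrable)
      (hcu.stronglyMeasurableAtFilter Metric.isOpen_ball x hx)
      (hcu.continuousAt (Metric.isOpen_ball.mem_nhds hx))
    exact ((convex_ball x₀ r).ordConnected).uIcc_subset hx₀B hx
  -- `u` is C² on `B`, hence `φ` is C³ on `B`
  have hvv1 : ContDiffOn ℝ 1 vv B := by
    rw [show (1 : WithTop ℕ∞) = 0 + 1 by norm_num,
      contDiffOn_succ_iff_deriv_of_isOpen Metric.isOpen_ball]
    refine ⟨fun x hx => ((hfv x (hBU hx)).differentiableAt).differentiableWithinAt,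
      by simp, ?_⟩
    rw [contDiffOn_zero]
    exact ((hq1.continuousOn.mono hBI).mul hucB).congr
      (fun x hx => (hfv x (hBU hx)).deriv)
  have huu2 : ContDiffOn ℝ 2 uu B := by
    rw [show (2 : WithTop ℕ∞) = 1 + 1 by norm_num,
      contDiffOn_succ_iff_deriv_of_isOpen Metric.isOpen_ball]
    refine ⟨fun x hx => ((hfu x (hBU hx)).differentiableAt).differentiableWithinAt,
      by simp, ?_⟩
    exact hvv1.congr (fun x hx => (hfu x (hBU hx)).deriv)
  have hφ3 : ContDiffOn ℝ 3 φ B := by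
    rw [show (3 : WithTop ℕ∞) = 2 + 1 by norm_num,
      contDiffOn_succ_iff_deriv_of_isOpen Metric.isOpen_ball]
    refine ⟨fun x hx => ((hdφ x hx).differentiableAt).differentiableWithinAt, by simp, ?_⟩
    exact (((huu2.pow 2).inv fun x hx => pow_ne_zero 2 (hBpos x hx).ne').congr
      fun x hx => (hdφ x hx).deriv)
  -- ## local inverse of φ
  have hc0 : ((uu x₀) ^ 2)⁻¹ ≠ 0 := inv_ne_zero (pow_ne_zero _ (hBpos x₀ hx₀B).ne')
  have hstrict : HasStrictDerivAt φ ((uu x₀) ^ 2)⁻¹ x₀ :=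
    (hφ3.contDiffAt (Metric.isOpen_ball.mem_nhds hx₀B)).hasStrictDerivAt'
      (hdφ x₀ hx₀B) (by norm_num)
  set Φ := HasStrictFDerivAt.toOpenPartialHomeomorph φ (hstrict.hasStrictFDerivAt_equiv hc0) with hΦdef
  have hΦcoe : (Φ : ℝ → ℝ) = φ :=
    HasStrictFDerivAt.toOpenPartialHomeomorph_coe (hstrict.hasStrictFDerivAt_equiv hc0)
  have hΦsrc : x₀ ∈ Φ.source :=
    HasStrictFDerivAt.mem_toOpenPartialHomeomorph_source (hstrict.hasStrictFDerivAt_equiv hc0)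
  obtain ⟨ρ, hρ, hρsub⟩ := Metric.mem_nhds_iff.mp
    (inter_mem (Metric.isOpen_ball.mem_nhds hx₀B) (Φ.open_source.mem_nhds hΦsrc))
  set J := Metric.ball x₀ ρ with hJdef
  have hJB : J ⊆ B := fun x hx => (hρsub hx).1
  have hJsrc : J ⊆ Φ.source := fun x hx => (hρsub hx).2
  have hJI : J ⊆ I := fun x hx => hBI (hJB hx)
  have hx₀J : x₀ ∈ J := Metric.mem_ball_self hρ
  -- ## the new coefficient
  set B0 : ℝ → ℝ := fun x =>
    a₀ x - a₁ x * a₂ x / 3 + 2 * (a₂ x) ^ 3 / 27 - deriv (deriv a₂) x / 3 with hB0def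
  set G : ℝ → ℝ := fun x => (uu x) ^ 6 * (B0 x + 2 * qd x) with hGdef
  have hGc : ContinuousOn G J := by
    refine ContinuousOn.mul ((hucB.mono hJB).pow 6) (ContinuousOn.add ?_
      (continuousOn_const.mul (hqdc.mono hJI)))
    exact ((((ha₀.mono hJI).sub (((ha₁.continuousOn.mono hJI).mul
      (ha₂.continuousOn.mono hJI)).div_const 3)).add
      ((continuousOn_const.mul ((ha₂.continuousOn.mono hJI).pow 3)).div_const 27)).sub
      ((hA2PPc.mono hJI).div_const 3))
  refine ⟨J, hJI, Metric.isOpen_ball, convex_ball _ _, hx₀J, φ, hφ3.mono hJB, ?_,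
    fun t => G (Φ.symm t), ?_, ?_⟩
  · intro x hx
    rw [(hdφ x (hJB hx)).deriv]
    have := hBpos x (hJB hx)
    positivity
  · -- continuity of g on φ '' J
    have himg : φ '' J ⊆ Φ.target := by
      rintro _ ⟨x, hx, rfl⟩
      rw [← hΦcoe]
      exact Φ.map_source (hJsrc hx)
    have hmaps : MapsTo Φ.symm (φ '' J) J := by
      rintro _ ⟨x, hx, rfl⟩
      rw [← hΦcoe, Φ.left_inv (hJsrc hx)]
      exact hx
    exact hGc.comp (Φ.continuousOn_symm.mono himg) hmaps
  · -- ## the main computation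
    intro y hydiff hyode z hzdiff hzeq
    have hu0 : ∀ x ∈ J, uu x ≠ 0 := fun x hx => (hBpos x (hJB hx)).ne'
    -- derivative facts for y
    have hy1 : ∀ x ∈ J, HasDerivAt y (deriv y x) x := by
      intro x hx
      have h := hydiff x hx 0 (by norm_num)
      rw [iteratedDeriv_zero] at h
      exact h.hasDerivAt
    have hy2 : ∀ x ∈ J, HasDerivAt (deriv y) (iteratedDeriv 2 y x) x := by
      intro x hx
      have h := hydiff x hx 1 (by norm_num)
      rw [iteratedDeriv_one] at h
      have h2 := h.hasDerivAt
      rwa [show iteratedDeriv 2 y x = deriv (deriv y) x by rw [iteratedDeriv_two']]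
    have hy3 : ∀ x ∈ J, HasDerivAt (iteratedDeriv 2 y) (iteratedDeriv 3 y x) x := by
      intro x hx
      have h := hydiff x hx 2 (by norm_num)
      have h2 := h.hasDerivAt
      rwa [show iteratedDeriv 3 y x = deriv (iteratedDeriv 2 y) x by rw [iteratedDeriv_three']]
    -- the exponential integrating factor
    set Eex : ℝ → ℝ := fun s => Real.exp ((1 / 3 : ℝ) * ∫ t in x₀..s, a₂ t) with hEexdef
    have hEd : ∀ x ∈ J, HasDerivAt Eex (a₂ x / 3 * Eex x) x := by
      intro x hx
      have hint : HasDerivAt (fun s => ∫ t in x₀..s, a₂ t) (a₂ x) x := by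
        refine integral_hasDerivAt_right ((ha₂.continuousOn.mono ?_).intervalIntegrable)
          (ha₂.continuousOn.stronglyMeasurableAtFilter hI x (hJI hx))
          (ha₂.continuousOn.continuousAt (hI.mem_nhds (hJI hx)))
        exact (((convex_ball x₀ ρ).ordConnected).uIcc_subset hx₀J hx).trans hJI
      have h := (hint.const_mul (1 / 3 : ℝ)).exp
      convert h using 1
      simp only [hEexdef]
      ring
    -- the transformed solution and its derivatives
    set w : ℝ → ℝ := fun s => Eex s * y s with hwdef
    set w1 : ℝ → ℝ := fun s => Eex s * (deriv y s + a₂ s * y s / 3) with hw1def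
    set w2 : ℝ → ℝ := fun s => Eex s * (iteratedDeriv 2 y s + 2 * a₂ s * deriv y s / 3 +
      (deriv a₂ s / 3 + a₂ s * a₂ s / 9) * y s) with hw2def
    set FF : ℝ → ℝ := fun s => ((uu s) ^ 2)⁻¹ * w s with hFFdef
    set D1 : ℝ → ℝ := fun s => w1 s - 2 * (uu s)⁻¹ * vv s * w s with hD1def
    set D2 : ℝ → ℝ := fun s => 2 * vv s ^ 2 * w s - 2 * qf s * uu s ^ 2 * w s
      - 2 * uu s * vv s * w1 s + uu s ^ 2 * w2 s with hD2def
    set D3 : ℝ → ℝ := fun s => -(uu s ^ 4 * (B0 s + 2 * qd s) * w s) with hD3def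
    have hdw : ∀ x ∈ J, HasDerivAt w (w1 x) x := by
      intro x hx
      have h := (hEd x hx).mul (hy1 x hx)
      refine h.congr_deriv ?_
      simp only [hw1def, Pi.add_apply, Pi.mul_apply, Pi.pow_apply, Pi.inv_apply, Pi.sub_apply, Pi.div_apply, Pi.neg_apply]
      ring
    have hdw1 : ∀ x ∈ J, HasDerivAt w1 (w2 x) x := by
      intro x hx
      have h := (hEd x hx).mul ((hy2 x hx).add
        (((hda₂ x (hJI hx)).mul (hy1 x hx)).div_const 3))
      refine h.congr_deriv ?_
      simp only [hw1def, hw2def, Pi.add_apply, Pi.mul_apply, Pi.pow_apply, Pi.inv_apply, Pi.sub_apply, Pi.div_apply, Pi.neg_apply]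
      ring
    have hdw2 : ∀ x ∈ J, HasDerivAt w2
        (-((a₁ x - deriv a₂ x - a₂ x * a₂ x / 3) * w1 x + B0 x * w x)) x := by
      intro x hx
      have h := (hEd x hx).mul (((hy3 x hx).add
        ((((hda₂ x (hJI hx)).const_mul 2).mul (hy2 x hx)).div_const 3)).add
        ((((hdA2P x (hJI hx)).div_const 3).add
          (((hda₂ x (hJI hx)).mul (hda₂ x (hJI hx))).div_const 9)).mul (hy1 x hx)))
      refine h.congr_deriv ?_
      have hode := hyode x hx
      simp only [hw1def, hw2def, hwdef, hB0def, Pi.add_apply, Pi.mul_apply, Pi.pow_apply, Pi.inv_apply, Pi.sub_apply, Pi.div_apply, Pi.neg_apply]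
      linear_combination (Eex x) * hode
    -- derivatives of the chain of functions
    have hdFF : ∀ x ∈ J, HasDerivAt FF (((uu x) ^ 2)⁻¹ * D1 x) x := by
      intro x hx
      have hu' := hfu x (hBU (hJB hx))
      have h := ((hu'.pow 2).inv (pow_ne_zero 2 (hu0 x hx))).mul (hdw x hx)
      refine h.congr_deriv ?_
      simp only [hD1def, Pi.add_apply, Pi.mul_apply, Pi.pow_apply, Pi.inv_apply, Pi.sub_apply, Pi.div_apply, Pi.neg_apply]
      field_simp [hu0 x hx]
      ring
    have hdD1 : ∀ x ∈ J, HasDerivAt D1 (((uu x) ^ 2)⁻¹ * D2 x) x := by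
      intro x hx
      have hu' := hfu x (hBU (hJB hx))
      have hv' := hfv x (hBU (hJB hx))
      have h := (hdw1 x hx).sub
        ((((hu'.inv (hu0 x hx)).const_mul 2).mul hv').mul (hdw x hx))
      refine h.congr_deriv ?_
      simp only [hD2def, Pi.add_apply, Pi.mul_apply, Pi.pow_apply, Pi.inv_apply, Pi.sub_apply, Pi.div_apply, Pi.neg_apply]
      field_simp [hu0 x hx]
      ring
    have hdD2 : ∀ x ∈ J, HasDerivAt D2 (((uu x) ^ 2)⁻¹ * D3 x) x := by
      intro x hx
      have hu' := hfu x (hBU (hJB hx))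
      have hv' := hfv x (hBU (hJB hx))
      have t1 := ((hv'.pow 2).const_mul 2).mul (hdw x hx)
      have t2 := (((hdq x (hJI hx)).const_mul 2).mul (hu'.pow 2)).mul (hdw x hx)
      have t3 := ((hu'.const_mul 2).mul hv').mul (hdw1 x hx)
      have t4 := (hu'.pow 2).mul (hdw2 x hx)
      have h := ((t1.sub t2).sub t3).add t4
      refine h.congr_deriv ?_
      simp only [hD3def, hD2def, hB0def, hqfdef, hqddef, Pi.add_apply, Pi.mul_apply, Pi.pow_apply, Pi.inv_apply, Pi.sub_apply, Pi.div_apply, Pi.neg_apply]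
      field_simp [hu0 x hx]
      ring
    -- transport derivatives through φ
    have hφd : ∀ x ∈ J, HasDerivAt φ ((uu x) ^ 2)⁻¹ x := fun x hx => hdφ x (hJB hx)
    have hJopen : IsOpen J := Metric.isOpen_ball
    have hzF : ∀ x ∈ J, z (φ x) = FF x := by
      intro x hx
      rw [hzeq x hx, (hφd x hx).deriv]
      simp only [hFFdef, hwdef, hEexdef]
      ring
    have hstep1 : ∀ x ∈ J, deriv z (φ x) = D1 x := by
      intro x hx
      have hzd : DifferentiableAt ℝ z (φ x) := by
        have h := hzdiff (φ x) (mem_image_of_mem φ hx) 0 (by norm_num)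
        rwa [iteratedDeriv_zero] at h
      have hcomp : deriv (z ∘ φ) x = deriv z (φ x) * deriv φ x :=
        deriv_comp x hzd (hφd x hx).differentiableAt
      have heq : deriv (z ∘ φ) x = deriv FF x := by
        apply Filter.EventuallyEq.deriv_eq
        filter_upwards [hJopen.mem_nhds hx] with s hs
        exact hzF s hs
      rw [heq, (hdFF x hx).deriv, (hφd x hx).deriv] at hcomp
      field_simp [pow_ne_zero 2 (hu0 x hx)] at hcomp
      linarith [(div_left_inj' (pow_ne_zero 2 (hu0 x hx))).mp hcomp]
    have hstep2 : ∀ x ∈ J, iteratedDeriv 2 z (φ x) = D2 x := by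
      intro x hx
      have hzd : DifferentiableAt ℝ (deriv z) (φ x) := by
        have h := hzdiff (φ x) (mem_image_of_mem φ hx) 1 (by norm_num)
        rwa [iteratedDeriv_one] at h
      have hcomp : deriv (deriv z ∘ φ) x = deriv (deriv z) (φ x) * deriv φ x :=
        deriv_comp x hzd (hφd x hx).differentiableAt
      have heq : deriv (deriv z ∘ φ) x = deriv D1 x := by
        apply Filter.EventuallyEq.deriv_eq
        filter_upwards [hJopen.mem_nhds hx] with s hs
        exact hstep1 s hs
      rw [heq, (hdD1 x hx).deriv, (hφd x hx).deriv,
        show deriv (deriv z) (φ x) = iteratedDeriv 2 z (φ x) by rw [iteratedDeriv_two']]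
        at hcomp
      field_simp [pow_ne_zero 2 (hu0 x hx)] at hcomp
      linarith [(div_left_inj' (pow_ne_zero 2 (hu0 x hx))).mp hcomp]
    have hstep3 : ∀ x ∈ J, iteratedDeriv 3 z (φ x) = D3 x := by
      intro x hx
      have hzd : DifferentiableAt ℝ (iteratedDeriv 2 z) (φ x) :=
        hzdiff (φ x) (mem_image_of_mem φ hx) 2 (by norm_num)
      have hcomp : deriv (iteratedDeriv 2 z ∘ φ) x =
          deriv (iteratedDeriv 2 z) (φ x) * deriv φ x :=
        deriv_comp x hzd (hφd x hx).differentiableAt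
      have heq : deriv (iteratedDeriv 2 z ∘ φ) x = deriv D2 x := by
        apply Filter.EventuallyEq.deriv_eq
        filter_upwards [hJopen.mem_nhds hx] with s hs
        exact hstep2 s hs
      rw [heq, (hdD2 x hx).deriv, (hφd x hx).deriv,
        show deriv (iteratedDeriv 2 z) (φ x) = iteratedDeriv 3 z (φ x) by
          rw [iteratedDeriv_three']] at hcomp
      field_simp [pow_ne_zero 2 (hu0 x hx)] at hcomp
      linarith [(div_left_inj' (pow_ne_zero 2 (hu0 x hx))).mp hcomp]
    -- conclusion
    rintro t ⟨x, hx, rfl⟩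
    have hg : Φ.symm (φ x) = x := by
      rw [← hΦcoe]
      exact Φ.left_inv (hJsrc hx)
    show iteratedDeriv 3 z (φ x) + G (Φ.symm (φ x)) * z (φ x) = 0
    rw [hstep3 x hx, hzF x hx, hg]
    simp only [hD3def, hFFdef, hGdef, hwdef]
    field_simp [hu0 x hx]
    ring
end
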